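/- (Infinite diameter, Theorem 2) The distant graph of P(ℤ) has infinite diameter: for every n ∈ ℕ there exist unimodular pairs x, y ∈ ℤ × ℤ such that x and y are joined by a path in the graph G (vertices: unimodular pairs; adjacency: |det| = 1), and the graph distance between x and y in G is at least n. -/

import Mathlib

/-- The determinant of two integer vectors in the plane. -/
def det (x y : ℤ × ℤ) : ℤ := x.1 * y.2 - x.2 * y.1

/-- The distant graph of the projective line over `ℤ`, on the level of unimodular pairs:
vertices are the unimodular pairs, and two of them are adjacent iff the absolute value of
their determinant is `1`. -/
def distGraph : SimpleGraph {x : ℤ × ℤ // Int.gcd x.1 x.2 = 1} where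
  Adj a b := |det a.1 b.1| = 1
  symm := by
    constructor
    intro a b h
    have : det b.1 a.1 = -(det a.1 b.1) := by simp only [det]; ring
    rw [this, abs_neg]
    exact h
  loopless := by
    constructor
    intro a h
    have : det a.1 a.1 = 0 := by simp only [det]; ring
    rw [this] at h
    simp at h

namespace InfDiamAuxM

def u (i : ℕ) : ℤ × ℤ := ((Nat.fib (i+1) : ℤ), (Nat.fib (i+2) : ℤ))

lemma u_prim (i : ℕ) : Int.gcd (u i).1 (u i).2 = 1 := by
  have h := Nat.fib_coprime_fib_succ (i+1)
  simpa [u, Int.gcd_natCast_natCast] using h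

lemma det_swap (a b : ℤ × ℤ) : det b a = -det a b := by simp only [det]; ring

lemma det_self (a : ℤ × ℤ) : det a a = 0 := by simp only [det]; ring

lemma det_add_right (a b c : ℤ × ℤ) : det a (b + c) = det a b + det a c := by
  simp only [det, Prod.fst_add, Prod.snd_add]; ring

lemma det_neg_right (a b : ℤ × ℤ) : det a (-b) = -det a b := by
  simp only [det, Prod.fst_neg, Prod.snd_neg]; ring

lemma det_neg_left (a b : ℤ × ℤ) : det (-a) b = -det a b := by
  simp only [det, Prod.fst_neg, Prod.snd_neg]; ring

lemma u_add_two (i : ℕ) : u (i+2) = u (i+1) + u i := by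
  have h1 : Nat.fib (i+3) = Nat.fib (i+1) + Nat.fib (i+2) := Nat.fib_add_two
  have h2 : Nat.fib (i+4) = Nat.fib (i+2) + Nat.fib (i+3) := Nat.fib_add_two
  simp only [u, Prod.mk_add_mk, Prod.mk.injEq]
  constructor <;> push_cast [h1, h2] <;> ring

lemma detU1 (i : ℕ) : det (u i) (u (i+1)) = (-1)^i := by
  induction i with
  | zero => simp [u, det]; decide
  | succ i ih =>
    have : u (i+2) = u (i+1) + u i := u_add_two i
    rw [this, det_add_right, det_self, det_swap, ih]
    ring

lemma detU : ∀ m j, det (u j) (u (j+m)) = (-1)^j * (Nat.fib m : ℤ) := by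
  intro m
  induction m using Nat.strong_induction_on with
  | _ m ih =>
    match m with
    | 0 => intro j; simp [det_self]
    | 1 => intro j; simpa using detU1 j
    | (m+2) =>
      intro j
      have h1 := ih (m+1) (by omega) j
      have h0 := ih m (by omega) j
      have e : j + (m+2) = (j + m) + 2 := by omega
      rw [e, u_add_two, det_add_right, show j + m + 1 = j + (m+1) from by omega, h1, h0,
        show Nat.fib (m+2) = Nat.fib m + Nat.fib (m+1) from Nat.fib_add_two]
      push_cast; ring


/-- The key "no crossing" lemma. -/
lemma sideA {a b z w : ℤ × ℤ} (hab : |det a b| = 1) (hzw : |det z w| = 1)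
    (hz : 0 < det a z * det z b) : 0 ≤ det a w * det w b := by
  by_contra hcon
  push_neg at hcon
  have key : det a b * det z w = det z b * det a w - det a z * det w b := by
    simp only [det]; ring
  have h1 : (det z b * det a w - det a z * det w b)^2 = 1 := by
    rw [← key]
    have habs : |det a b * det z w| = 1 := by rw [abs_mul, hab, hzw]; ring
    calc (det a b * det z w)^2 = |det a b * det z w|^2 := (sq_abs _).symm
    _ = 1 := by rw [habs]; ring
  have hP : 0 < (det a z * det z b) * (-(det a w * det w b)) :=
    mul_pos hz (by linarith)
  nlinarith [sq_nonneg (det z b * det a w + det a z * det w b), hz, hcon, hP, h1]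

lemma eq_or_neg {z w : ℤ × ℤ} (hz : Int.gcd z.1 z.2 = 1) (hw : Int.gcd w.1 w.2 = 1)
    (h : det z w = 0) : w = z ∨ w = -z := by
  obtain ⟨a, b⟩ := z
  obtain ⟨c, d⟩ := w
  simp only [det] at h
  have he : a * d = b * c := by linarith
  have cz : IsCoprime a b := Int.isCoprime_iff_gcd_eq_one.mpr hz
  have cw : IsCoprime c d := Int.isCoprime_iff_gcd_eq_one.mpr hw
  have d1 : a ∣ c := cz.dvd_of_dvd_mul_right ⟨d, by linarith⟩
  have d2 : b ∣ d := cz.symm.dvd_of_dvd_mul_right ⟨c, by linarith⟩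
  have e1 : c ∣ a := cw.dvd_of_dvd_mul_right ⟨b, by linarith⟩
  have e2 : d ∣ b := cw.symm.dvd_of_dvd_mul_right ⟨a, by linarith⟩
  have a1 : c = a ∨ c = -a := by
    have := Nat.dvd_antisymm (Int.natAbs_dvd_natAbs.mpr e1) (Int.natAbs_dvd_natAbs.mpr d1)
    exact Int.natAbs_eq_natAbs_iff.mp this
  have a2 : d = b ∨ d = -b := by
    have := Nat.dvd_antisymm (Int.natAbs_dvd_natAbs.mpr e2) (Int.natAbs_dvd_natAbs.mpr d2)
    exact Int.natAbs_eq_natAbs_iff.mp this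
  have hor : (c = a ∧ d = b) ∨ (c = -a ∧ d = -b) := by
    rcases a1 with h1 | h1 <;> rcases a2 with h2 | h2
    · exact Or.inl ⟨h1, h2⟩
    · have hab : a * b = 0 := by rw [h1, h2] at he; linarith
      rcases mul_eq_zero.mp hab with h0 | h0
      · exact Or.inr ⟨by omega, h2⟩
      · exact Or.inl ⟨h1, by omega⟩
    · have hab : a * b = 0 := by rw [h1, h2] at he; linarith
      rcases mul_eq_zero.mp hab with h0 | h0
      · exact Or.inl ⟨by omega, h2⟩
      · exact Or.inr ⟨h1, by omega⟩
    · exact Or.inr ⟨h1, h2⟩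
  rcases hor with ⟨h1, h2⟩ | ⟨h1, h2⟩
  · left; simp [Prod.ext_iff, h1, h2]
  · right; simp [Prod.ext_iff, h1, h2]

lemma sideU (j s : ℕ) : 0 < det (u j) (u (j+(s+2))) * det (u (j+(s+2))) (u (j+1)) := by
  have h1 : det (u j) (u (j+(s+2))) = (-1)^j * (Nat.fib (s+2) : ℤ) := detU _ j
  have h2 : det (u (j+1)) (u (j+(s+2))) = (-1)^(j+1) * (Nat.fib (s+1) : ℤ) := by
    have := detU (s+1) (j+1)
    rwa [show (j+1)+(s+1) = j+(s+2) from by omega] at this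
  rw [h1, det_swap, h2]
  have p1 : (0:ℤ) < (Nat.fib (s+2) : ℤ) := by exact_mod_cast Nat.fib_pos.mpr (by omega)
  have p2 : (0:ℤ) < (Nat.fib (s+1) : ℤ) := by exact_mod_cast Nat.fib_pos.mpr (by omega)
  rcases Nat.even_or_odd j with hj | hj
  · rw [hj.neg_one_pow, (hj.add_one).neg_one_pow]
    nlinarith
  · rw [hj.neg_one_pow, (Odd.add_one hj).neg_one_pow]
    nlinarith

def X : {x : ℤ × ℤ // Int.gcd x.1 x.2 = 1} := ⟨(1,0), by decide⟩

def U (i : ℕ) : {x : ℤ × ℤ // Int.gcd x.1 x.2 = 1} := ⟨u i, u_prim i⟩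

lemma adjU (i : ℕ) : distGraph.Adj (U i) (U (i+1)) := by
  show |det (u i) (u (i+1))| = 1
  rw [detU1]
  simp [abs_pow]

lemma reach (m : ℕ) : distGraph.Reachable X (U m) := by
  induction m with
  | zero =>
    have h : distGraph.Adj X (U 0) := by
      show |det (1,0) (u 0)| = 1
      simp [u, det]
    exact h.reachable
  | succ m ih => exact ih.trans (adjU m).reachable

end InfDiamAuxM

open InfDiamAuxM

/-- The distant graph of `P(ℤ)` has infinite diameter: for every `n` there are two
unimodular pairs joined by a path whose graph distance is at least `n`. -/
theorem distGraph_infinite_diameter :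
    ∀ n : ℕ, ∃ x y : {x : ℤ × ℤ // Int.gcd x.1 x.2 = 1},
      distGraph.Reachable x y ∧ n ≤ distGraph.dist x y := by
  intro n
  rcases Nat.eq_zero_or_pos n with rfl | hn
  · exact ⟨X, X, SimpleGraph.Reachable.refl X, Nat.zero_le _⟩
  refine ⟨X, U (2*n), reach (2*n), ?_⟩
  obtain ⟨p, hp⟩ := (reach (2*n)).exists_walk_length_eq_dist
  rw [← hp]
  let k := p.length
  show n ≤ k
  let w : ℕ → ℤ × ℤ := fun t => (p.getVert t).1
  have hw0 : w 0 = (1, 0) := by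
    show (p.getVert 0).1 = (1, 0)
    rw [p.getVert_zero]; rfl
  have hwk : w k = u (2*n) := by
    show (p.getVert p.length).1 = u (2*n)
    rw [p.getVert_length]; rfl
  have hwprim : ∀ t, Int.gcd (w t).1 (w t).2 = 1 := fun t => (p.getVert t).2
  have hadj : ∀ t, t < k → |det (w t) (w (t+1))| = 1 := fun t ht => p.adj_getVert_succ ht
  have hQk : ∀ i, i < n → 0 < det (u (2*i)) (w k) * det (w k) (u (2*i+1)) := by
    intro i hi
    rw [hwk]
    have := sideU (2*i) (2*n - 2*i - 2)
    rwa [show 2*i + (2*n - 2*i - 2 + 2) = 2*n from by omega] at this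
  have hQ0 : ∀ i, det (u (2*i)) (w 0) * det (w 0) (u (2*i+1)) < 0 := by
    intro i
    rw [hw0]
    have p1 : (0:ℤ) < (Nat.fib (2*i+2) : ℤ) := by exact_mod_cast Nat.fib_pos.mpr (by omega)
    have p2 : (0:ℤ) < (Nat.fib (2*i+1+2) : ℤ) := by exact_mod_cast Nat.fib_pos.mpr (by omega)
    simp only [u, det]
    nlinarith
  have hex : ∀ i, i < n → ∃ t, 0 < det (u (2*i)) (w t) * det (w t) (u (2*i+1)) :=
    fun i hi => ⟨k, hQk i hi⟩
  have hTk : ∀ i (hi : i < n), Nat.find (hex i hi) ≤ k := fun i hi => Nat.find_min' _ (hQk i hi)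
  have hT1 : ∀ i (hi : i < n), 1 ≤ Nat.find (hex i hi) := by
    intro i hi
    rcases Nat.eq_zero_or_pos (Nat.find (hex i hi)) with h | h
    · exfalso
      have hs := Nat.find_spec (hex i hi)
      rw [h] at hs
      have := hQ0 i
      omega
    · exact h
  have hstep : ∀ i (h1 : i < n) (h2 : i+1 < n),
      Nat.find (hex i h1) < Nat.find (hex (i+1) h2) := by
    intro i h1 h2
    set t := Nat.find (hex (i+1) h2) with htdef
    have ht1 : 1 ≤ t := hT1 _ h2
    have htk : t ≤ k := hTk _ h2
    have hQt : 0 < det (u (2*(i+1))) (w t) * det (w t) (u (2*(i+1)+1)) :=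
      Nat.find_spec (hex (i+1) h2)
    have hnot : ¬ (0 < det (u (2*(i+1))) (w (t-1)) * det (w (t-1)) (u (2*(i+1)+1))) :=
      Nat.find_min (hex (i+1) h2) (by omega)
    have hadj' : |det (w (t-1)) (w t)| = 1 := by
      have := hadj (t-1) (by omega)
      rwa [show t-1+1 = t from by omega] at this
    have hzw : |det (w t) (w (t-1))| = 1 := by rw [det_swap, abs_neg]; exact hadj'
    have huv : |det (u (2*(i+1))) (u (2*(i+1)+1))| = 1 := by rw [detU1]; simp [abs_pow]
    have hge := sideA huv hzw hQt
    have heq : det (u (2*(i+1))) (w (t-1)) * det (w (t-1)) (u (2*(i+1)+1)) = 0 := by omega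
    have hQprev : 0 < det (u (2*i)) (w (t-1)) * det (w (t-1)) (u (2*i+1)) := by
      rcases mul_eq_zero.mp heq with h0 | h0
      · rcases eq_or_neg (u_prim (2*(i+1))) (hwprim (t-1)) h0 with hh | hh
        · rw [hh]
          have := sideU (2*i) 0
          rwa [show 2*i + (0+2) = 2*(i+1) from by omega] at this
        · rw [hh, det_neg_right, det_neg_left, neg_mul_neg]
          have := sideU (2*i) 0
          rwa [show 2*i + (0+2) = 2*(i+1) from by omega] at this
      · have h0' : det (u (2*(i+1)+1)) (w (t-1)) = 0 := by rw [det_swap]; omega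
        rcases eq_or_neg (u_prim (2*(i+1)+1)) (hwprim (t-1)) h0' with hh | hh
        · rw [hh]
          have := sideU (2*i) 1
          rwa [show 2*i + (1+2) = 2*(i+1)+1 from by omega] at this
        · rw [hh, det_neg_right, det_neg_left, neg_mul_neg]
          have := sideU (2*i) 1
          rwa [show 2*i + (1+2) = 2*(i+1)+1 from by omega] at this
    have : Nat.find (hex i h1) ≤ t - 1 := Nat.find_min' _ hQprev
    omega
  have hchain : ∀ i (hi : i < n), i + 1 ≤ Nat.find (hex i hi) := by
    intro i
    induction i with
    | zero => intro hi; exact hT1 0 hi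
    | succ i ih =>
      intro hi
      have h1 : i < n := by omega
      have := ih h1
      have := hstep i h1 hi
      omega
  have h1 := hchain (n-1) (by omega)
  have h2 := hTk (n-1) (by omega)
  omega
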